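/- Let G be an inverse semigroup, H' ⊆ G a finite sub-inverse semigroup, and A a G-algebra; let c₀(G_H/H) be the C*-algebra of complex-valued functions on the discrete set G_H/H vanishing at infinity, with pointwise operations, and let δ_{[h]} denote the characteristic function of the class of h ∈ G_H. Then: (1) if h, h' ∈ G_H with h ≡ h' and g ∈ G, then g·h ∈ G_H if and only if g·h' ∈ G_H, and in that case g·h ≡ g·h'; (2) for each g ∈ G there is a (unique) bounded *-endomorphism β_g of c₀(G_H/H) with β_g(δ_{[h]}) = [g·h ∈ G_H]·δ_{[g·h]} for all h ∈ G_H; (3) g ↦ β_g is a semigroup homomorphism and satisfies β_{g g*}(x)·y = x·β_{g g*}(y) for all x, y ∈ c₀(G_H/H) and g ∈ G, i.e., it makes c₀(G_H/H) a G-algebra. -/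

import Mathlib

/-! Common setup: inverse semigroups, G-algebras, and the universal *-algebra 𝔽(G,A). -/

noncomputable section

/-- An inverse semigroup: a semigroup in which every element `g` has a unique
generalized inverse, denoted `star g`. -/
class InverseSemigroup (G : Type*) extends Semigroup G, Star G where
  mul_star_mul_self : ∀ g : G, g * star g * g = g
  star_mul_self_mul_star : ∀ g : G, star g * g * star g = star g
  star_unique : ∀ g h : G, g * h * g = g → h * g * h = h → h = star g

namespace Green

/-! ### The free complex *-algebra on a set of generators

The free complex *-algebra on a set `Y` is realized as the monoid algebra of the free
monoid on the letters `Y × Bool` (a generator together with a formal star flag); its star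
operation conjugates coefficients, reverses words and flips the star flags. -/

/-- The free complex *-algebra on the set `Y`. -/
abbrev FreeStar (Y : Type*) := MonoidAlgebra ℂ (FreeMonoid (Y × Bool))

namespace FreeStar

variable {Y : Type*}

/-- Star of a word: reverse it and flip all star flags. -/
def wordStar (w : FreeMonoid (Y × Bool)) : FreeMonoid (Y × Bool) :=
  FreeMonoid.ofList (((FreeMonoid.toList w).map fun x => (x.1, !x.2)).reverse)

lemma wordStar_mul (v w : FreeMonoid (Y × Bool)) :
    wordStar (v * w) = wordStar w * wordStar v := by
  simp [wordStar, FreeMonoid.toList_mul]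

lemma wordStar_wordStar (w : FreeMonoid (Y × Bool)) : wordStar (wordStar w) = w := by
  simp [wordStar, List.map_reverse, List.map_map, Function.comp_def]

/-- The star operation on the free complex *-algebra, as an additive map. -/
def starAux : FreeStar Y →+ FreeStar Y :=
  MonoidAlgebra.coeffAddEquiv.symm.toAddMonoidHom.comp <|
  ((Finsupp.mapDomain.addMonoidHom wordStar).comp
    (Finsupp.mapRange.addMonoidHom (starRingEnd ℂ).toAddMonoidHom)).comp
    MonoidAlgebra.coeffAddEquiv.toAddMonoidHom

lemma starAux_apply (f : FreeStar Y) :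
    starAux f = MonoidAlgebra.ofCoeff
      (Finsupp.mapDomain wordStar (Finsupp.mapRange (starRingEnd ℂ) (map_zero _) f.coeff)) :=
  rfl

lemma starAux_single (w : FreeMonoid (Y × Bool)) (c : ℂ) :
    starAux (MonoidAlgebra.single w c) = MonoidAlgebra.single (wordStar w) (starRingEnd ℂ c) := by
  rw [starAux_apply]
  simp only [MonoidAlgebra.single, MonoidAlgebra.coeff_ofCoeff, Finsupp.mapRange_single,
    Finsupp.mapDomain_single]

instance instStarRing : StarRing (FreeStar Y) where
  star := starAux
  star_involutive := by
    intro f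
    induction f using MonoidAlgebra.induction_linear with
    | zero => simp
    | add f g hf hg => simp_all [map_add]
    | single w c => simp [starAux_single, wordStar_wordStar, starRingEnd_self_apply]
  star_mul := by
    intro f g
    show starAux (f * g) = starAux g * starAux f
    induction f using MonoidAlgebra.induction_linear with
    | zero => simp
    | add f f' hf hf' => simp [mul_add, add_mul, map_add, hf, hf']
    | single w c =>
      induction g using MonoidAlgebra.induction_linear with
      | zero => simp
      | add g g' hg hg' => simp [mul_add, add_mul, map_add, hg, hg']
      | single v d =>
        simp only [MonoidAlgebra.single_mul_single, starAux_single, wordStar_mul, map_mul]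
        rw [mul_comm]
  star_add := map_add _

end FreeStar

section GAlgebra

variable {G : Type*} [InverseSemigroup G]
variable {A : Type*} [NonUnitalNormedRing A] [StarRing A] [CStarRing A] [NormedSpace ℂ A]
  [IsScalarTower ℂ A A] [SMulCommClass ℂ A A] [StarModule ℂ A] [CompleteSpace A]

/-- `α` is an action of the inverse semigroup `G` on the C*-algebra `A` making it a
`G`-algebra: a semigroup homomorphism `G → End(A)` into the *-endomorphisms of `A` such
that `g g*(a)·b = a·g g*(b)` for all `a b : A` and `g : G`. -/
structure IsGAlgebra (α : G → A →⋆ₙₐ[ℂ] A) : Prop where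
  map_mul : ∀ g h : G, α (g * h) = (α g).comp (α h)
  central : ∀ (g : G) (a b : A), α (g * star g) a * b = a * α (g * star g) b

variable (α : G → A →⋆ₙₐ[ℂ] A)

/-- The generator of the free *-algebra corresponding to `a ∈ A`. -/
def genA (a : A) : FreeStar (A ⊕ G) := MonoidAlgebra.single (FreeMonoid.of (Sum.inl a, false)) 1

/-- The generator of the free *-algebra corresponding to `g ∈ G`. -/
def genG (g : G) : FreeStar (A ⊕ G) := MonoidAlgebra.single (FreeMonoid.of (Sum.inr g, false)) 1

/-- The defining relations of `𝔽(G,A)`: the *-algebra relations of `A` are respected, the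
multiplication and involution of `G` are respected, and `g(a)·g g* = g·a·g*`,
`[g g*, a] = 0` hold; the relation is moreover closed under `star`, so that the ideal
generated by it is a two-sided *-ideal. -/
inductive Rel : FreeStar (A ⊕ G) → FreeStar (A ⊕ G) → Prop
  | add_A (a b : A) : Rel (genA (G := G) (a + b)) (genA a + genA b)
  | smul_A (c : ℂ) (a : A) : Rel (genA (G := G) (c • a)) (c • genA a)
  | mul_A (a b : A) : Rel (genA (G := G) (a * b)) (genA a * genA b)
  | star_A (a : A) : Rel (genA (G := G) (star a)) (star (genA a))
  | mul_G (g h : G) : Rel (genG (A := A) (g * h)) (genG g * genG h)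
  | star_G (g : G) : Rel (genG (A := A) (star g)) (star (genG g))
  | act (g : G) (a : A) :
      Rel (genA (α g a) * genG g * genG (star g)) (genG g * genA a * genG (star g))
  | comm (g : G) (a : A) :
      Rel (genG g * genG (star g) * genA a) (genA a * genG g * genG (star g))
  | star_cl {x y} : Rel x y → Rel (star x) (star y)

/-- The universal *-algebra `𝔽(G,A)`: the quotient of the free complex *-algebra on the
set `A ⊔ G` by the two-sided *-ideal generated by the defining relations. -/
abbrev F := RingQuot (Rel α)

instance : StarRing (F α) := RingQuot.starRing _ (fun _ _ h => Rel.star_cl h)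

/-- The canonical copy of `a ∈ A` inside `𝔽(G,A)`. -/
def ιA (a : A) : F α := RingQuot.mkAlgHom ℂ (Rel α) (genA a)

/-- The canonical copy of `g ∈ G` inside `𝔽(G,A)`. -/
def ιG (g : G) : F α := RingQuot.mkAlgHom ℂ (Rel α) (genG g)

/-- The element `e₀(1-e₁)⋯(1-eₙ)` of `𝔽(G,A)` (product expanded multiplicatively),
given `e₀` and the list `[e₁, …, eₙ]`. -/
def elemP (e₀ : G) (l : List G) : F α :=
  l.foldl (fun p e => p - p * ιG α e) (ιG α e₀)

/-- The element `g·e₀(1-e₁)⋯(1-eₙ)` of `𝔽(G,A)`. -/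
def elemGE (g e₀ : G) (l : List G) : F α := ιG α g * elemP α e₀ l

/-- The set `E(G)` of projections `e₀(1-e₁)⋯(1-eₙ)` in `𝔽(G,A)`, with `e₀, …, eₙ`
idempotents of `G`. -/
def EG : Set (F α) :=
  {x | ∃ (e₀ : G) (l : List G), e₀ * e₀ = e₀ ∧ (∀ e ∈ l, e * e = e) ∧ x = elemP α e₀ l}

/-- The inverse semigroup `G_E = {g·p | g ∈ G, p ∈ E(G)}` inside `𝔽(G,A)`. -/
def GE : Set (F α) :=
  {x | ∃ (g e₀ : G) (l : List G),
    e₀ * e₀ = e₀ ∧ (∀ e ∈ l, e * e = e) ∧ x = elemGE α g e₀ l}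

/-- The extension of the `G`-action along a list: `(id - α e₁)∘⋯∘(id - α eₙ)`. -/
def actL : List G → A → A
  | [] => id
  | e :: l => fun a => actL l a - α e (actL l a)

/-- The extension of the `G`-action to `E(G)`:
`α_{e₀(1-e₁)⋯(1-eₙ)} = α_{e₀}∘(id - α_{e₁})∘⋯∘(id - α_{eₙ})`. -/
def actP (e₀ : G) (l : List G) : A → A := fun a => α e₀ (actL α l a)

/-- The extension of the `G`-action to `G_E`: `α_{g·p} = α_g ∘ α_p`. -/
def actGE (g e₀ : G) (l : List G) : A → A := fun a => α g (actP α e₀ l a)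

/-- The action of `k* = (g·e₀(1-e₁)⋯(1-eₙ))* = g*·(g e₀ g*)(1 - g e₁ g*)⋯(1 - g eₙ g*)`,
for `k = g·e₀(1-e₁)⋯(1-eₙ) ∈ G_E`. -/
def actStar (g e₀ : G) (l : List G) : A → A :=
  fun a => α (star g) (actP α (g * e₀ * star g) (l.map fun e => g * e * star g) a)

/-- The subalgebra `A_{k k*} = α_{k k*}(A) = (α_k ∘ α_{k*})(A)`,
for `k = g·e₀(1-e₁)⋯(1-eₙ) ∈ G_E`. -/
def carrier (g e₀ : G) (l : List G) : Set A :=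
  Set.range fun a => actGE α g e₀ l (actStar α g e₀ l a)

/-- `S` is a sub-inverse semigroup of `G`: a subset closed under multiplication and
involution. -/
structure IsSubInvSemigroup (S : Set G) : Prop where
  mul_mem : ∀ {a b : G}, a ∈ S → b ∈ S → a * b ∈ S
  star_mem : ∀ {a : G}, a ∈ S → star a ∈ S

variable (S : Set G)

/-- The set `E(H')` of projections `e₀(1-e₁)⋯(1-eₙ)` with `e₀, …, eₙ` idempotents of
`H' = S`. -/
def EH : Set (F α) :=
  {x | ∃ (e₀ : G) (l : List G), (e₀ ∈ S ∧ e₀ * e₀ = e₀) ∧ (∀ e ∈ l, e ∈ S ∧ e * e = e) ∧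
    x = elemP α e₀ l}

/-- `H⁽⁰⁾`: the set of nonzero minimal projections of `E(H')`
(where `q ≤ p` means `q p = q`). -/
def H0 : Set (F α) :=
  {p | p ∈ EH α S ∧ p ≠ 0 ∧ ∀ q ∈ EH α S, q ≠ 0 → q * p = q → q = p}

/-- The groupoid `H = {t·e | t ∈ H', e ∈ H⁽⁰⁾} \ {0}` associated to `H'`. -/
def Hgpd : Set (F α) :=
  {x | x ≠ 0 ∧ ∃ t ∈ S, ∃ e ∈ H0 α S, x = ιG α t * e}

/-- `G_H = {g·e | g ∈ G, e ∈ H⁽⁰⁾, g* g ≥ e} \ {0}`. -/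
def GH : Set (F α) :=
  {x | x ≠ 0 ∧ ∃ (g : G), ∃ e ∈ H0 α S, x = ιG α g * e ∧ e * ιG α (star g * g) = e}

/-- The relation `≡` on `G_H`: `g ≡ h` iff `g t = h` for some `t ∈ H`. -/
def equivH (x y : F α) : Prop := ∃ t ∈ Hgpd α S, x * t = y

end GAlgebra

/-- For an assertion `P`, the scalar `[P]` which is `1` if `P` is true and `0` if `P`
is false. -/
def ind (P : Prop) : ℂ := @ite _ P (Classical.propDecidable P) 1 0

end Green

namespace Green

open scoped ZeroAtInfty

section Quotient

variable {G : Type*} [InverseSemigroup G]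
variable {A : Type*} [NonUnitalNormedRing A] [StarRing A] [CStarRing A] [NormedSpace ℂ A]
  [IsScalarTower ℂ A A] [SMulCommClass ℂ A A] [StarModule ℂ A] [CompleteSpace A]
variable (α : G → A →⋆ₙₐ[ℂ] A) (S : Set G)

/-- The set-theoretical quotient `G_H/H` of `G_H` by the relation `≡`. -/
def QGH := Quot (fun x y : {z : F α // z ∈ GH α S} => equivH α S x.1 y.1)

/-- The class of an element of `G_H` in `G_H/H`. -/
def QGHmk (x : {z : F α // z ∈ GH α S}) : QGH α S := Quot.mk _ x

/-- `G_H/H` is a discrete (topological) space. -/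
instance : TopologicalSpace (QGH α S) := ⊥
instance : DiscreteTopology (QGH α S) := ⟨rfl⟩

variable {W : Type*} [NormedAddCommGroup W]

/-- The function `w·δ_q ∈ C₀(G_H/H, W)` supported at the single point `q`, with value
`w` there.  (On the discrete space `G_H/H` such functions vanish at infinity.) -/
def deltaFn (q : QGH α S) (w : W) : C₀(QGH α S, W) where
  toFun := fun x => @ite _ (x = q) (Classical.propDecidable _) w 0
  continuous_toFun := continuous_of_discreteTopology
  zero_at_infty' := by
    have hmem : {x : QGH α S | (@ite _ (x = q) (Classical.propDecidable _) w 0) = 0}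
        ∈ Filter.cocompact (QGH α S) :=
      Filter.mem_cocompact.mpr ⟨{q}, isCompact_singleton,
        fun x hx => if_neg (by simpa using hx)⟩
    refine Filter.Tendsto.congr' ?_ tendsto_const_nhds
    filter_upwards [hmem] with x hx
    exact hx.symm

end Quotient

end Green

namespace ISG
variable {G : Type*} [InverseSemigroup G]

open InverseSemigroup

lemma star_star (g : G) : star (star g) = g :=
  (star_unique (star g) g (star_mul_self_mul_star g) (mul_star_mul_self g)).symm

lemma star_idem {e : G} (he : e * e = e) : star e = e :=
  (star_unique e e (by rw [he, he]) (by rw [he, he])).symm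

lemma idem_star_mul (g : G) : (star g * g) * (star g * g) = star g * g := by
  have h := star_mul_self_mul_star g
  calc star g * g * (star g * g) = star g * g * star g * g := by simp [mul_assoc]
  _ = star g * g := by rw [h]

lemma idem_mul_star (g : G) : (g * star g) * (g * star g) = g * star g := by
  have h := mul_star_mul_self g
  calc g * star g * (g * star g) = g * star g * g * star g := by simp [mul_assoc]
  _ = g * star g := by rw [h]

private lemma idem_mul_aux {e f : G} (he : e * e = e) (hf : f * f = f) :
    (e * f) * (e * f) = e * f ∧ star (e * f) = e * f := by
  set x := star (e * f) with hx
  have h1 : (e * f) * x * (e * f) = e * f := mul_star_mul_self (e * f)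
  have h2 : x * (e * f) * x = x := star_mul_self_mul_star (e * f)
  have hinv1 : (e * f) * (f * x * e) * (e * f) = e * f := by
    calc (e * f) * (f * x * e) * (e * f) = e * (f * f) * x * (e * e) * f := by
          simp [mul_assoc]
    _ = (e * f) * x * (e * f) := by rw [he, hf]; simp [mul_assoc]
    _ = e * f := h1
  have hinv2 : (f * x * e) * (e * f) * (f * x * e) = f * x * e := by
    calc (f * x * e) * (e * f) * (f * x * e) = f * (x * ((e * e) * (f * f)) * x) * e := by
          simp [mul_assoc]
    _ = f * (x * (e * f) * x) * e := by rw [he, hf]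
    _ = f * x * e := by rw [h2]
  have hxe : f * x * e = x := star_unique (e * f) (f * x * e) hinv1 hinv2
  have hxidem : x * x = x := by
    have h3 : x * x = (f * x * e) * (f * x * e) := by rw [hxe]
    have h4 : (f * x * e) * (f * x * e) = f * (x * (e * f) * x) * e := by simp [mul_assoc]
    rw [h3, h4, h2, hxe]
  have hef_eq_x : e * f = x := by
    have hs : star x = x := star_idem hxidem
    rw [hx] at hs ⊢
    rw [← hs, star_star]
  constructor
  · rw [hef_eq_x]; exact hxidem
  · rw [← hef_eq_x]
lemma idem_mul_idem {e f : G} (he : e * e = e) (hf : f * f = f) :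
    (e * f) * (e * f) = e * f := (idem_mul_aux he hf).1

lemma idem_comm {e f : G} (he : e * e = e) (hf : f * f = f) : e * f = f * e := by
  have hef := (idem_mul_aux he hf).1
  have hfe := (idem_mul_aux hf he).1
  have g1 : (e * f) * (f * e) * (e * f) = e * f := by
    calc (e * f) * (f * e) * (e * f) = e * (f * f) * (e * e) * f := by simp [mul_assoc]
    _ = (e * f) * (e * f) := by rw [he, hf]; simp [mul_assoc]
    _ = e * f := hef
  have g2 : (f * e) * (e * f) * (f * e) = f * e := by
    calc (f * e) * (e * f) * (f * e) = f * (e * e) * (f * f) * e := by simp [mul_assoc]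
    _ = (f * e) * (f * e) := by rw [he, hf]; simp [mul_assoc]
    _ = f * e := hfe
  have h := star_unique (e * f) (f * e) g1 g2
  rw [h, (idem_mul_aux he hf).2]

lemma star_mul (g h : G) : star (g * h) = star h * star g := by
  have hgg := idem_mul_star g
  have hhh := idem_mul_star h
  have hg'g := idem_star_mul g
  have c1 : (h * star h) * (star g * g) = (star g * g) * (h * star h) :=
    idem_comm hhh hg'g
  have inv1 : (g * h) * (star h * star g) * (g * h) = g * h := by
    calc (g * h) * (star h * star g) * (g * h)
        = g * ((h * star h) * (star g * g)) * h := by simp [mul_assoc]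
    _ = g * ((star g * g) * (h * star h)) * h := by rw [c1]
    _ = (g * star g * g) * (h * star h * h) := by simp [mul_assoc]
    _ = g * h := by rw [InverseSemigroup.mul_star_mul_self, InverseSemigroup.mul_star_mul_self]
  have inv2 : (star h * star g) * (g * h) * (star h * star g) = star h * star g := by
    calc (star h * star g) * (g * h) * (star h * star g)
        = star h * ((star g * g) * (h * star h)) * star g := by simp [mul_assoc]
    _ = star h * ((h * star h) * (star g * g)) * star g := by rw [← c1]
    _ = (star h * h * star h) * (star g * g * star g) := by simp [mul_assoc]
    _ = star h * star g := by
        rw [InverseSemigroup.star_mul_self_mul_star, InverseSemigroup.star_mul_self_mul_star]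
  exact (star_unique (g * h) (star h * star g) inv1 inv2).symm

lemma conj_idem {e : G} (u : G) (he : e * e = e) :
    (star u * e * u) * (star u * e * u) = star u * e * u := by
  have h1 : e * (u * star u) * e = e * (u * star u) := by
    calc e * (u * star u) * e = e * ((u * star u) * e) := by rw [mul_assoc]
    _ = e * (e * (u * star u)) := by rw [idem_comm (idem_mul_star u) he]
    _ = (e * e) * (u * star u) := by rw [mul_assoc]
    _ = e * (u * star u) := by rw [he]
  calc (star u * e * u) * (star u * e * u)
      = star u * (e * (u * star u) * e) * u := by simp [mul_assoc]
  _ = star u * (e * (u * star u)) * u := by rw [h1]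
  _ = star u * e * (u * star u * u) := by simp [mul_assoc]
  _ = star u * e * u := by rw [InverseSemigroup.mul_star_mul_self]


end ISG

namespace Green

section Aux

variable {G : Type*} [InverseSemigroup G]
variable {A : Type*} [NonUnitalNormedRing A] [StarRing A] [CStarRing A] [NormedSpace ℂ A]
  [IsScalarTower ℂ A A] [SMulCommClass ℂ A A] [StarModule ℂ A] [CompleteSpace A]
variable (α : G → A →⋆ₙₐ[ℂ] A) (S : Set G)

set_option linter.unusedSectionVars false

lemma ιG_mul (g h : G) : ιG α (g * h) = ιG α g * ιG α h := by
  unfold ιG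
  rw [RingQuot.mkAlgHom_rel ℂ (Rel.mul_G g h), map_mul]

lemma mkF_eq (x : FreeStar (A ⊕ G)) :
    RingQuot.mkAlgHom ℂ (Rel α) x = ⟨Quot.mk _ x⟩ := by
  have h : RingQuot.mkAlgHom ℂ (Rel α) x = RingQuot.mkRingHom (Rel α) x := by
    rw [← RingQuot.mkAlgHom_coe ℂ (Rel α)]; rfl
  rw [h, RingQuot.mkRingHom_def]; rfl

lemma star_mkF (x : FreeStar (A ⊕ G)) :
    star (RingQuot.mkAlgHom ℂ (Rel α) x) = RingQuot.mkAlgHom ℂ (Rel α) (star x) := by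
  rw [mkF_eq, mkF_eq]
  rfl

lemma ιG_star (g : G) : star (ιG α g) = ιG α (star g) := by
  unfold ιG
  rw [star_mkF, RingQuot.mkAlgHom_rel ℂ (Rel.star_G g)]

/-- The product `(1-e₁)⋯(1-eₙ)`. -/
def Pl (l : List G) : F α := (l.map fun e => 1 - ιG α e).prod

lemma Pl_nil : Pl α ([] : List G) = 1 := rfl

lemma Pl_cons (e : G) (l : List G) : Pl α (e :: l) = (1 - ιG α e) * Pl α l := by
  simp [Pl]

lemma elemP_eq (e₀ : G) (l : List G) : elemP α e₀ l = ιG α e₀ * Pl α l := by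
  have key : ∀ (l : List G) (p : F α),
      l.foldl (fun p e => p - p * ιG α e) p = p * Pl α l := by
    intro l
    induction l with
    | nil => intro p; simp [Pl_nil]
    | cons e l ih =>
      intro p
      have h1 : p * (1 - ιG α e) = p - p * ιG α e := by rw [mul_sub, mul_one]
      simp only [List.foldl_cons]
      rw [ih, ← h1, Pl_cons, mul_assoc]
  exact key l (ιG α e₀)

lemma commute_ιG {e f : G} (he : e * e = e) (hf : f * f = f) :
    Commute (ιG α e) (ιG α f) := by
  unfold Commute SemiconjBy
  rw [← ιG_mul, ← ιG_mul, ISG.idem_comm he hf]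

lemma commute_ιG_Pl {f : G} (hf : f * f = f) {l : List G} (hl : ∀ e ∈ l, e * e = e) :
    Commute (ιG α f) (Pl α l) := by
  induction l with
  | nil => rw [Pl_nil]; exact Commute.one_right _
  | cons e l ih =>
    rw [Pl_cons]
    exact Commute.mul_right
      ((Commute.one_right _).sub_right (commute_ιG α hf (hl e (by simp))))
      (ih (fun e he => hl e (by simp [he])))

lemma commute_ιG_elemP {f : G} (hf : f * f = f) {e₀ : G} (he₀ : e₀ * e₀ = e₀)
    {l : List G} (hl : ∀ e ∈ l, e * e = e) :
    Commute (ιG α f) (elemP α e₀ l) := by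
  rw [elemP_eq]
  exact Commute.mul_right (commute_ιG α hf he₀) (commute_ιG_Pl α hf hl)

lemma commute_Pl_Pl {l m : List G} (hl : ∀ e ∈ l, e * e = e) (hm : ∀ e ∈ m, e * e = e) :
    Commute (Pl α l) (Pl α m) := by
  induction l with
  | nil => rw [Pl_nil]; exact Commute.one_left _
  | cons e l ih =>
    rw [Pl_cons]
    exact Commute.mul_left
      ((Commute.one_left _).sub_left (commute_ιG_Pl α (hl e (by simp)) hm))
      (ih (fun e he => hl e (by simp [he])))

lemma Pl_sq {l : List G} (hl : ∀ e ∈ l, e * e = e) : Pl α l * Pl α l = Pl α l := by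
  induction l with
  | nil => rw [Pl_nil, one_mul]
  | cons e l ih =>
    have he : e * e = e := hl e (by simp)
    have hl' : ∀ e ∈ l, e * e = e := fun e he => hl e (by simp [he])
    have hx : ιG α e * ιG α e = ιG α e := by rw [← ιG_mul, he]
    have ha : (1 - ιG α e) * (1 - ιG α e) = 1 - ιG α e := by
      calc (1 - ιG α e) * (1 - ιG α e) = (1 - ιG α e) - (1 - ιG α e) * ιG α e := by
            rw [mul_sub, mul_one]
      _ = 1 - ιG α e - (ιG α e - ιG α e * ιG α e) := by rw [sub_mul, one_mul]
      _ = 1 - ιG α e := by rw [hx, sub_self, sub_zero]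
    have hc : Commute (Pl α l) (1 - ιG α e) :=
      ((Commute.one_left _).sub_left (commute_ιG_Pl α he hl')).symm
    rw [Pl_cons]
    calc (1 - ιG α e) * Pl α l * ((1 - ιG α e) * Pl α l)
        = (1 - ιG α e) * (Pl α l * (1 - ιG α e)) * Pl α l := by simp [mul_assoc]
    _ = (1 - ιG α e) * ((1 - ιG α e) * Pl α l) * Pl α l := by rw [hc]
    _ = ((1 - ιG α e) * (1 - ιG α e)) * (Pl α l * Pl α l) := by simp [mul_assoc]
    _ = (1 - ιG α e) * Pl α l := by rw [ha, ih hl']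

lemma Pl_star {l : List G} (hl : ∀ e ∈ l, e * e = e) : star (Pl α l) = Pl α l := by
  induction l with
  | nil => rw [Pl_nil, star_one]
  | cons e l ih =>
    have he : e * e = e := hl e (by simp)
    have hl' : ∀ e ∈ l, e * e = e := fun e he => hl e (by simp [he])
    have hse : star (1 - ιG α e) = 1 - ιG α e := by
      rw [star_sub, star_one, ιG_star, ISG.star_idem he]
    have hc : Commute (Pl α l) (1 - ιG α e) :=
      ((Commute.one_left _).sub_left (commute_ιG_Pl α he hl')).symm
    rw [Pl_cons, star_mul, ih hl', hse, hc]

lemma Pl_swap (u : G) {l : List G} (hl : ∀ e ∈ l, e * e = e) :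
    Pl α l * ιG α u = ιG α u * Pl α (l.map fun e => star u * e * u) := by
  induction l with
  | nil => simp [Pl_nil]
  | cons e l ih =>
    have he : e * e = e := hl e (by simp)
    have hl' : ∀ e ∈ l, e * e = e := fun e he => hl e (by simp [he])
    have hG : u * (star u * e * u) = e * u := by
      calc u * (star u * e * u) = (u * star u) * e * u := by simp [mul_assoc]
      _ = e * (u * star u) * u := by rw [ISG.idem_comm (ISG.idem_mul_star u) he]
      _ = e * (u * star u * u) := by simp [mul_assoc]
      _ = e * u := by rw [InverseSemigroup.mul_star_mul_self]
    have step : (1 - ιG α e) * ιG α u = ιG α u * (1 - ιG α (star u * e * u)) := by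
      rw [sub_mul, one_mul, mul_sub, mul_one, ← ιG_mul, ← ιG_mul, hG]
    rw [Pl_cons, List.map_cons, Pl_cons, mul_assoc, ih hl', ← mul_assoc, step, mul_assoc]

lemma elemP_swap (u : G) {e₀ : G} (he₀ : e₀ * e₀ = e₀) {l : List G}
    (hl : ∀ e ∈ l, e * e = e) :
    elemP α e₀ l * ιG α u
      = ιG α u * elemP α (star u * e₀ * u) (l.map fun e => star u * e * u) := by
  have hG : u * (star u * e₀ * u) = e₀ * u := by
    calc u * (star u * e₀ * u) = (u * star u) * e₀ * u := by simp [mul_assoc]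
    _ = e₀ * (u * star u) * u := by rw [ISG.idem_comm (ISG.idem_mul_star u) he₀]
    _ = e₀ * (u * star u * u) := by simp [mul_assoc]
    _ = e₀ * u := by rw [InverseSemigroup.mul_star_mul_self]
  rw [elemP_eq, elemP_eq, mul_assoc, Pl_swap α u hl, ← mul_assoc, ← ιG_mul, ← hG, ιG_mul,
    mul_assoc, mul_assoc]

lemma elemP_conj (u : G) {e₀ : G} (he₀ : e₀ * e₀ = e₀) {l : List G}
    (hl : ∀ e ∈ l, e * e = e) :
    ιG α (star u) * elemP α e₀ l * ιG α u
      = elemP α (star u * e₀ * u) (l.map fun e => star u * e * u) := by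
  have hGeq : star u * u * (star u * e₀ * u) = star u * e₀ * u := by
    calc star u * u * (star u * e₀ * u) = (star u * u * star u) * e₀ * u := by simp [mul_assoc]
    _ = star u * e₀ * u := by rw [InverseSemigroup.star_mul_self_mul_star]
  rw [mul_assoc, elemP_swap α u he₀ hl, ← mul_assoc, ← ιG_mul, elemP_eq, ← mul_assoc,
    ← ιG_mul, hGeq]

lemma Pl_append (l m : List G) : Pl α (l ++ m) = Pl α l * Pl α m := by
  simp [Pl]

lemma iota_mem_EH {f : G} (hf : f ∈ S) (hff : f * f = f) : ιG α f ∈ EH α S :=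
  ⟨f, [], ⟨hf, hff⟩, by simp, rfl⟩

lemma EH_mul (hS : IsSubInvSemigroup S) {p q : F α} (hp : p ∈ EH α S) (hq : q ∈ EH α S) : p * q ∈ EH α S := by
  obtain ⟨e₀, l, ⟨he₀S, he₀⟩, hl, rfl⟩ := hp
  obtain ⟨f₀, m, ⟨hf₀S, hf₀⟩, hm, rfl⟩ := hq
  refine ⟨e₀ * f₀, l ++ m, ⟨hS.mul_mem he₀S hf₀S, ISG.idem_mul_idem he₀ hf₀⟩,
    fun e he => ?_, ?_⟩
  · rcases List.mem_append.mp he with h | h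
    exacts [hl e h, hm e h]
  · rw [elemP_eq, elemP_eq, elemP_eq, Pl_append]
    have hc : Commute (ιG α f₀) (Pl α l) := commute_ιG_Pl α hf₀ (fun e he => (hl e he).2)
    calc ιG α e₀ * Pl α l * (ιG α f₀ * Pl α m)
        = ιG α e₀ * (Pl α l * ιG α f₀) * Pl α m := by simp [mul_assoc]
    _ = ιG α e₀ * (ιG α f₀ * Pl α l) * Pl α m := by rw [hc.symm.eq]
    _ = ιG α e₀ * ιG α f₀ * (Pl α l * Pl α m) := by simp [mul_assoc]
    _ = ιG α (e₀ * f₀) * (Pl α l * Pl α m) := by rw [ιG_mul]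

lemma EH_sq {p : F α} (hp : p ∈ EH α S) : p * p = p := by
  obtain ⟨e₀, l, ⟨he₀S, he₀⟩, hl, rfl⟩ := hp
  have hl' : ∀ e ∈ l, e * e = e := fun e he => (hl e he).2
  have hc : Commute (ιG α e₀) (Pl α l) := commute_ιG_Pl α he₀ hl'
  rw [elemP_eq]
  calc ιG α e₀ * Pl α l * (ιG α e₀ * Pl α l)
      = ιG α e₀ * (Pl α l * ιG α e₀) * Pl α l := by simp [mul_assoc]
  _ = ιG α e₀ * (ιG α e₀ * Pl α l) * Pl α l := by rw [hc.symm.eq]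
  _ = (ιG α e₀ * ιG α e₀) * (Pl α l * Pl α l) := by simp [mul_assoc]
  _ = ιG α e₀ * Pl α l := by rw [← ιG_mul, he₀, Pl_sq α hl']

lemma EH_star {p : F α} (hp : p ∈ EH α S) : star p = p := by
  obtain ⟨e₀, l, ⟨he₀S, he₀⟩, hl, rfl⟩ := hp
  have hl' : ∀ e ∈ l, e * e = e := fun e he => (hl e he).2
  have hc : Commute (ιG α e₀) (Pl α l) := commute_ιG_Pl α he₀ hl'
  rw [elemP_eq, star_mul, Pl_star α hl', ιG_star, ISG.star_idem he₀, hc.eq]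

lemma EH_commute_idem {p : F α} (hp : p ∈ EH α S) {f : G} (hf : f * f = f) :
    ιG α f * p = p * ιG α f := by
  obtain ⟨e₀, l, ⟨he₀S, he₀⟩, hl, rfl⟩ := hp
  exact (commute_ιG_elemP α hf he₀ (fun e he => (hl e he).2)).eq

lemma EH_comm {p q : F α} (hp : p ∈ EH α S) (hq : q ∈ EH α S) : p * q = q * p := by
  obtain ⟨e₀, l, ⟨he₀S, he₀⟩, hl, rfl⟩ := hp
  obtain ⟨f₀, m, ⟨hf₀S, hf₀⟩, hm, rfl⟩ := hq
  have hl' : ∀ e ∈ l, e * e = e := fun e he => (hl e he).2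
  have hm' : ∀ e ∈ m, e * e = e := fun e he => (hm e he).2
  rw [elemP_eq, elemP_eq]
  exact (Commute.mul_left
    (Commute.mul_right (commute_ιG α he₀ hf₀) (commute_ιG_Pl α he₀ hm'))
    (Commute.mul_right (commute_ιG_Pl α hf₀ hl').symm (commute_Pl_Pl α hl' hm'))).eq

lemma EH_conj_mem (hS : IsSubInvSemigroup S) {p : F α} (hp : p ∈ EH α S) {u : G} (hu : u ∈ S) :
    ιG α (star u) * p * ιG α u ∈ EH α S := by
  obtain ⟨e₀, l, ⟨he₀S, he₀⟩, hl, rfl⟩ := hp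
  rw [elemP_conj α u he₀ (fun e he => (hl e he).2)]
  exact ⟨star u * e₀ * u, l.map fun e => star u * e * u,
    ⟨hS.mul_mem (hS.mul_mem (hS.star_mem hu) he₀S) hu, ISG.conj_idem u he₀⟩,
    fun e he => by
      obtain ⟨e', he', rfl⟩ := List.mem_map.mp he
      exact ⟨hS.mul_mem (hS.mul_mem (hS.star_mem hu) (hl e' he').1) hu,
        ISG.conj_idem u (hl e' he').2⟩, rfl⟩

lemma EH_swap {p : F α} (hp : p ∈ EH α S) (u : G) :
    p * ιG α u = ιG α u * (ιG α (star u) * p * ιG α u) := by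
  calc p * ιG α u = p * ιG α (u * star u * u) := by rw [InverseSemigroup.mul_star_mul_self]
  _ = p * (ιG α (u * star u) * ιG α u) := by rw [ιG_mul]
  _ = ιG α (u * star u) * p * ιG α u := by
      rw [← mul_assoc, ← EH_commute_idem α S hp (ISG.idem_mul_star u)]
  _ = ιG α u * (ιG α (star u) * p * ιG α u) := by rw [ιG_mul]; simp [mul_assoc]

lemma GH_key {x : F α} (hx : x ∈ GH α S) {u : G} {e : F α} (he : e ∈ H0 α S)
    (hrep : x = ιG α u * e) :
    star x * x = e ∧ e * ιG α (star u * u) = e := by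
  obtain ⟨hx0, g, e', he', hrep', hcond⟩ := hx
  have heEH : e ∈ EH α S := he.1
  have he'EH : e' ∈ EH α S := he'.1
  have smul : ∀ (v : G) (p : F α), p ∈ EH α S →
      star (ιG α v * p) * (ιG α v * p) = p * ιG α (star v * v) := by
    intro v p hp
    rw [star_mul, EH_star α S hp, ιG_star]
    calc p * ιG α (star v) * (ιG α v * p) = p * (ιG α (star v) * ιG α v) * p := by
          simp [mul_assoc]
    _ = p * ιG α (star v * v) * p := by rw [ιG_mul]
    _ = p * (ιG α (star v * v) * p) := by rw [mul_assoc]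
    _ = p * (p * ιG α (star v * v)) := by rw [EH_commute_idem α S hp (ISG.idem_star_mul v)]
    _ = p * ιG α (star v * v) := by rw [← mul_assoc, EH_sq α S hp]
  have h1 : star x * x = e * ιG α (star u * u) := by rw [hrep]; exact smul u e heEH
  have h2 : star x * x = e' := by rw [hrep', smul g e' he'EH, hcond]
  have qle : e' * e = e' := by
    rw [← h2, h1]
    calc e * ιG α (star u * u) * e = e * (ιG α (star u * u) * e) := by rw [mul_assoc]
    _ = e * (e * ιG α (star u * u)) := by rw [EH_commute_idem α S heEH (ISG.idem_star_mul u)]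
    _ = e * ιG α (star u * u) := by rw [← mul_assoc, EH_sq α S heEH]
  have hee : e' = e := he.2.2 e' he'EH he'.2.1 qle
  exact ⟨by rw [h2, hee], by rw [← h1, h2, hee]⟩

lemma GH_cancel {x : F α} {g g₁ : G} {e₁ : F α}
    (hx : ιG α g * x ∈ GH α S) (he₁ : e₁ ∈ H0 α S) (hrep : x = ιG α g₁ * e₁) :
    ιG α (star g) * (ιG α g * x) = x := by
  have hgx : ιG α g * x = ιG α (g * g₁) * e₁ := by rw [hrep, ιG_mul, mul_assoc]
  have key := (GH_key α S hx he₁ hgx).2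
  have hGeq : star g * (g * g₁) = g₁ * (star (g * g₁) * (g * g₁)) := by
    rw [ISG.star_mul]
    calc star g * (g * g₁) = (star g * g) * (g₁ * star g₁ * g₁) := by
          rw [InverseSemigroup.mul_star_mul_self]; simp [mul_assoc]
    _ = (star g * g) * (g₁ * star g₁) * g₁ := by simp [mul_assoc]
    _ = (g₁ * star g₁) * (star g * g) * g₁ := by
          rw [ISG.idem_comm (ISG.idem_star_mul g) (ISG.idem_mul_star g₁)]
    _ = g₁ * (star g₁ * star g * (g * g₁)) := by simp [mul_assoc]
  rw [hrep]
  calc ιG α (star g) * (ιG α g * (ιG α g₁ * e₁))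
      = ιG α (star g) * (ιG α (g * g₁) * e₁) := by simp [ιG_mul, mul_assoc]
  _ = ιG α (star g * (g * g₁)) * e₁ := by simp [ιG_mul, mul_assoc]
  _ = ιG α (g₁ * (star (g * g₁) * (g * g₁))) * e₁ := by rw [hGeq]
  _ = ιG α g₁ * (ιG α (star (g * g₁) * (g * g₁)) * e₁) := by simp [ιG_mul, mul_assoc]
  _ = ιG α g₁ * (e₁ * ιG α (star (g * g₁) * (g * g₁))) := by
        rw [EH_commute_idem α S he₁.1 (ISG.idem_star_mul (g * g₁))]
  _ = ιG α g₁ * e₁ := by rw [key]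

lemma GH_mul_H_rep (hS : IsSubInvSemigroup S) {x : F α} {g : G} {e : F α} (hx : x ∈ GH α S) (he : e ∈ H0 α S)
    (hrep : x = ιG α g * e) {s : G} (hs : s ∈ S) {f : F α} (hf : f ∈ H0 α S)
    (hne : x * (ιG α s * f) ≠ 0) :
    x * (ιG α s * f) = ιG α (g * s) * f ∧ x * (ιG α s * f) ∈ GH α S := by
  have hcond : e * ιG α (star g * g) = e := (GH_key α S hx he hrep).2
  have hesEH : ιG α (star s) * e * ιG α s ∈ EH α S := EH_conj_mem α S hS he.1 hs
  have heq : x * (ιG α s * f) = ιG α (g * s) * ((ιG α (star s) * e * ιG α s) * f) := by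
    rw [hrep]
    calc ιG α g * e * (ιG α s * f) = ιG α g * (e * ιG α s) * f := by simp [mul_assoc]
    _ = ιG α g * (ιG α s * (ιG α (star s) * e * ιG α s)) * f := by
          rw [EH_swap α S he.1 s]
    _ = ιG α (g * s) * ((ιG α (star s) * e * ιG α s) * f) := by simp [ιG_mul, mul_assoc]
  have hq : (ιG α (star s) * e * ιG α s) * f ∈ EH α S := EH_mul α S hS hesEH hf.1
  have hqne : (ιG α (star s) * e * ιG α s) * f ≠ 0 := by
    intro h0; exact hne (by rw [heq, h0, mul_zero])
  have hqle : (ιG α (star s) * e * ιG α s) * f * f = (ιG α (star s) * e * ιG α s) * f := by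
    rw [mul_assoc, EH_sq α S hf.1]
  have hqf : (ιG α (star s) * e * ιG α s) * f = f := hf.2.2 _ hq hqne hqle
  have heq2 : x * (ιG α s * f) = ιG α (g * s) * f := by rw [heq, hqf]
  have hGeq : s * (star (g * s) * (g * s)) = (star g * g) * s := by
    rw [ISG.star_mul]
    calc s * (star s * star g * (g * s)) = (s * star s) * (star g * g) * s := by
          simp [mul_assoc]
    _ = (star g * g) * (s * star s) * s := by
          rw [ISG.idem_comm (ISG.idem_mul_star s) (ISG.idem_star_mul g)]
    _ = (star g * g) * (s * star s * s) := by simp [mul_assoc]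
    _ = (star g * g) * s := by rw [InverseSemigroup.mul_star_mul_self]
  have hesabs : (ιG α (star s) * e * ιG α s) * ιG α (star (g * s) * (g * s))
      = ιG α (star s) * e * ιG α s := by
    calc ιG α (star s) * e * ιG α s * ιG α (star (g * s) * (g * s))
        = ιG α (star s) * e * ιG α (s * (star (g * s) * (g * s))) := by
          simp [ιG_mul, mul_assoc]
    _ = ιG α (star s) * e * (ιG α (star g * g) * ιG α s) := by rw [hGeq, ιG_mul]
    _ = ιG α (star s) * (e * ιG α (star g * g)) * ιG α s := by simp [mul_assoc]
    _ = ιG α (star s) * e * ιG α s := by rw [hcond]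
  have hfcond : f * ιG α (star (g * s) * (g * s)) = f := by
    calc f * ιG α (star (g * s) * (g * s))
        = (ιG α (star s) * e * ιG α s) * f * ιG α (star (g * s) * (g * s)) := by rw [hqf]
    _ = (ιG α (star s) * e * ιG α s) * (ιG α (star (g * s) * (g * s)) * f) := by
          rw [mul_assoc, EH_commute_idem α S hf.1 (ISG.idem_star_mul (g * s))]
    _ = (ιG α (star s) * e * ιG α s) * ιG α (star (g * s) * (g * s)) * f := by
          simp [mul_assoc]
    _ = (ιG α (star s) * e * ιG α s) * f := by rw [hesabs]
    _ = f := hqf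
  exact ⟨heq2, hne, g * s, f, hf, heq2, hfcond⟩

lemma equivH_refl {h : F α} (hh : h ∈ GH α S) : equivH α S h h := by
  obtain ⟨g₁, e₁, he₁, hrep, hcond⟩ := hh.2
  obtain ⟨e₀, l, ⟨he₀S, he₀⟩, hl, hP⟩ := he₁.1
  have habs : ιG α e₀ * e₁ = e₁ := by
    rw [hP, elemP_eq, ← mul_assoc, ← ιG_mul, he₀]
  refine ⟨e₁, ⟨he₁.2.1, e₀, he₀S, e₁, he₁, habs.symm⟩, ?_⟩
  rw [hrep, mul_assoc, EH_sq α S he₁.1]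

lemma equivH_symm (hS : IsSubInvSemigroup S) {h h' : F α} (hh : h ∈ GH α S)
    (hh' : h' ∈ GH α S) (he : equivH α S h h') : equivH α S h' h := by
  obtain ⟨t, ⟨ht0, s, hsS, f, hf, htrep⟩, hmul⟩ := he
  obtain ⟨g₁, e₁, he₁, hrep, hcond⟩ := hh.2
  have hne : h * (ιG α s * f) ≠ 0 := by rw [← htrep, hmul]; exact hh'.1
  have hmh := GH_mul_H_rep α S hS hh he₁ hrep hsS hf hne
  have hsw : f * ιG α (star s) = ιG α (star s) * (ιG α s * f * ιG α (star s)) := by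
    have h := EH_swap α S hf.1 (star s)
    rwa [ISG.star_star] at h
  have hψEH : ιG α s * f * ιG α (star s) ∈ EH α S := by
    have h := EH_conj_mem α S hS hf.1 (hS.star_mem hsS)
    rwa [ISG.star_star] at h
  have hqEH : (ιG α s * f * ιG α (star s)) * e₁ ∈ EH α S := EH_mul α S hS hψEH he₁.1
  have hqle : (ιG α s * f * ιG α (star s)) * e₁ * e₁ = (ιG α s * f * ιG α (star s)) * e₁ := by
    rw [mul_assoc, EH_sq α S he₁.1]
  have hh'eq : h' = h * (ιG α s * f) := by rw [← hmul, htrep]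
  have hsh : star h' * h = ιG α (star s) * ((ιG α s * f * ιG α (star s)) * e₁) := by
    calc star h' * h = star (h * (ιG α s * f)) * h := by rw [← hh'eq]
    _ = star (ιG α s * f) * (star h * h) := by rw [star_mul, mul_assoc]
    _ = (f * ιG α (star s)) * e₁ := by
          rw [(GH_key α S hh he₁ hrep).1, star_mul, EH_star α S hf.1, ιG_star]
    _ = ιG α (star s) * (ιG α s * f * ιG α (star s)) * e₁ := by rw [hsw]
    _ = ιG α (star s) * ((ιG α s * f * ιG α (star s)) * e₁) := by rw [mul_assoc]
  obtain ⟨g₂, e₂, he₂, hrep₂, hcond₂⟩ := hh'.2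
  have hsh' : star h' * h' = e₂ := (GH_key α S hh' he₂ hrep₂).1
  have hqne : (ιG α s * f * ιG α (star s)) * e₁ ≠ 0 := by
    intro h0
    have hz : star h' * h = 0 := by rw [hsh, h0, mul_zero]
    have h2 : star h' * h' = 0 := by
      calc star h' * h' = star h' * (h * (ιG α s * f)) := by rw [← hh'eq]
      _ = (star h' * h) * (ιG α s * f) := by rw [mul_assoc]
      _ = 0 := by rw [hz, zero_mul]
    exact he₂.2.1 (by rw [← hsh', h2])
  have hqe : (ιG α s * f * ιG α (star s)) * e₁ = e₁ := he₁.2.2 _ hqEH hqne hqle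
  -- e₁ * ι(s * star s) = e₁
  have hrEH : e₁ * ιG α (s * star s) ∈ EH α S :=
    EH_mul α S hS he₁.1 (iota_mem_EH α S (hS.mul_mem hsS (hS.star_mem hsS)) (ISG.idem_mul_star s))
  have hψabs : (ιG α s * f * ιG α (star s)) * ιG α (s * star s)
      = ιG α s * f * ιG α (star s) := by
    have hG : star s * (s * star s) = star s := by
      rw [← mul_assoc, InverseSemigroup.star_mul_self_mul_star]
    calc ιG α s * f * ιG α (star s) * ιG α (s * star s)
        = ιG α s * f * ιG α (star s * (s * star s)) := by simp [ιG_mul, mul_assoc]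
    _ = ιG α s * f * ιG α (star s) := by rw [hG]
  have hrne : e₁ * ιG α (s * star s) ≠ 0 := by
    intro h0
    have : e₁ = 0 := by
      calc e₁ = (ιG α s * f * ιG α (star s)) * e₁ := hqe.symm
      _ = ((ιG α s * f * ιG α (star s)) * ιG α (s * star s)) * e₁ := by rw [hψabs]
      _ = (ιG α s * f * ιG α (star s)) * (ιG α (s * star s) * e₁) := by rw [mul_assoc]
      _ = (ιG α s * f * ιG α (star s)) * (e₁ * ιG α (s * star s)) := by
            rw [EH_commute_idem α S he₁.1 (ISG.idem_mul_star s)]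
      _ = 0 := by rw [h0, mul_zero]
    exact he₁.2.1 this
  have hrle : e₁ * ιG α (s * star s) * e₁ = e₁ * ιG α (s * star s) := by
    calc e₁ * ιG α (s * star s) * e₁ = e₁ * (ιG α (s * star s) * e₁) := by rw [mul_assoc]
    _ = e₁ * (e₁ * ιG α (s * star s)) := by
          rw [EH_commute_idem α S he₁.1 (ISG.idem_mul_star s)]
    _ = e₁ * ιG α (s * star s) := by rw [← mul_assoc, EH_sq α S he₁.1]
  have hre : e₁ * ιG α (s * star s) = e₁ := he₁.2.2 _ hrEH hrne hrle
  have main : h' * (ιG α (star s) * e₁) = h := by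
    calc h' * (ιG α (star s) * e₁) = ιG α (g₁ * s) * f * (ιG α (star s) * e₁) := by
          rw [hh'eq, hmh.1]
    _ = ιG α (g₁ * s) * (f * ιG α (star s)) * e₁ := by simp [mul_assoc]
    _ = ιG α (g₁ * s) * (ιG α (star s) * (ιG α s * f * ιG α (star s))) * e₁ := by rw [hsw]
    _ = ιG α (g₁ * s * star s) * ((ιG α s * f * ιG α (star s)) * e₁) := by
          simp [ιG_mul, mul_assoc]
    _ = ιG α (g₁ * s * star s) * e₁ := by rw [hqe]
    _ = ιG α g₁ * (ιG α (s * star s) * e₁) := by simp [ιG_mul, mul_assoc]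
    _ = ιG α g₁ * (e₁ * ιG α (s * star s)) := by
          rw [EH_commute_idem α S he₁.1 (ISG.idem_mul_star s)]
    _ = ιG α g₁ * e₁ := by rw [hre]
    _ = h := hrep.symm
  have ht''ne : ιG α (star s) * e₁ ≠ 0 := by
    intro h0
    exact hh.1 (by rw [← main, h0, mul_zero])
  exact ⟨ιG α (star s) * e₁, ⟨ht''ne, star s, hS.star_mem hsS, e₁, he₁, rfl⟩, main⟩

lemma equivH_trans (hS : IsSubInvSemigroup S) {h h' h'' : F α} (hh'' : h'' ∈ GH α S)
    (e1 : equivH α S h h') (e2 : equivH α S h' h'') : equivH α S h h'' := by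
  obtain ⟨t, ⟨ht0, s, hsS, f, hf, htrep⟩, hmul⟩ := e1
  obtain ⟨t', ⟨ht'0, s', hs'S, f', hf', ht'rep⟩, hmul'⟩ := e2
  have hsw : f * ιG α s' = ιG α s' * (ιG α (star s') * f * ιG α s') := EH_swap α S hf.1 s'
  have htt' : t * t' = ιG α (s * s') * ((ιG α (star s') * f * ιG α s') * f') := by
    rw [htrep, ht'rep]
    calc ιG α s * f * (ιG α s' * f') = ιG α s * (f * ιG α s') * f' := by simp [mul_assoc]
    _ = ιG α s * (ιG α s' * (ιG α (star s') * f * ιG α s')) * f' := by rw [hsw]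
    _ = ιG α (s * s') * ((ιG α (star s') * f * ιG α s') * f') := by simp [ιG_mul, mul_assoc]
  have hqEH : (ιG α (star s') * f * ιG α s') * f' ∈ EH α S :=
    EH_mul α S hS (EH_conj_mem α S hS hf.1 hs'S) hf'.1
  have hh''eq : h'' = h * (t * t') := by rw [← mul_assoc, hmul, hmul']
  have htt'ne : t * t' ≠ 0 := by
    intro h0
    exact hh''.1 (by rw [hh''eq, h0, mul_zero])
  have hqne : (ιG α (star s') * f * ιG α s') * f' ≠ 0 := by
    intro h0
    exact htt'ne (by rw [htt', h0, mul_zero])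
  have hqle : (ιG α (star s') * f * ιG α s') * f' * f' = (ιG α (star s') * f * ιG α s') * f' := by
    rw [mul_assoc, EH_sq α S hf'.1]
  have hqf : (ιG α (star s') * f * ιG α s') * f' = f' := hf'.2.2 _ hqEH hqne hqle
  exact ⟨t * t', ⟨htt'ne, s * s', hS.mul_mem hsS hs'S, f', hf', by rw [htt', hqf]⟩,
    hh''eq.symm⟩

lemma equivH_fwd (hS : IsSubInvSemigroup S) {h h' t : F α} (hh : h ∈ GH α S)
    (hh' : h' ∈ GH α S) (ht : t ∈ Hgpd α S) (hmul : h * t = h') (g : G)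
    (hgh : ιG α g * h ∈ GH α S) :
    ιG α g * h' ∈ GH α S ∧ (ιG α g * h) * t = ιG α g * h' := by
  have h2 : (ιG α g * h) * t = ιG α g * h' := by rw [mul_assoc, hmul]
  obtain ⟨ht0, s, hsS, f, hf, htrep⟩ := ht
  obtain ⟨g₁, e₁, he₁, hrep, hcond⟩ := hh.2
  have hgrep : ιG α g * h = ιG α (g * g₁) * e₁ := by rw [hrep, ιG_mul, mul_assoc]
  have hcanc : ιG α (star g) * (ιG α g * h) = h := GH_cancel α S hgh he₁ hrep
  have hne : (ιG α g * h) * (ιG α s * f) ≠ 0 := by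
    intro h0
    apply hh'.1
    have hstep : h * t = ιG α (star g) * ((ιG α g * h) * t) := by
      rw [← mul_assoc, hcanc]
    rw [← hmul, hstep, htrep, h0, mul_zero]
  have hres := GH_mul_H_rep α S hS hgh he₁ hgrep hsS hf hne
  refine ⟨?_, h2⟩
  rw [← h2, htrep]
  exact hres.2

lemma equivH_inj {h h' t : F α} (hh : h ∈ GH α S) (hh' : h' ∈ GH α S) (g : G)
    (hgh : ιG α g * h ∈ GH α S) (hgh' : ιG α g * h' ∈ GH α S)
    (hmul : (ιG α g * h) * t = ιG α g * h') : h * t = h' := by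
  obtain ⟨g₁, e₁, he₁, hrep, hcond⟩ := hh.2
  obtain ⟨g₂, e₂, he₂, hrep₂, hcond₂⟩ := hh'.2
  calc h * t = (ιG α (star g) * (ιG α g * h)) * t := by rw [GH_cancel α S hgh he₁ hrep]
  _ = ιG α (star g) * ((ιG α g * h) * t) := by rw [mul_assoc]
  _ = ιG α (star g) * (ιG α g * h') := by rw [hmul]
  _ = h' := GH_cancel α S hgh' he₂ hrep₂

lemma GH_decomp {h : F α} (hh : h ∈ GH α S) (g g' : G)
    (hx : ιG α (g * g') * h ∈ GH α S) : ιG α g' * h ∈ GH α S := by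
  obtain ⟨g₁, e₁, he₁, hrep, hcond⟩ := hh.2
  have hxrep : ιG α (g * g') * h = ιG α (g * g' * g₁) * e₁ := by
    rw [hrep]; simp [ιG_mul, mul_assoc]
  have key := (GH_key α S hx he₁ hxrep).2
  have hne : ιG α g' * h ≠ 0 := by
    intro h0
    apply hx.1
    rw [ιG_mul, mul_assoc, h0, mul_zero]
  have hGidem : star (g * g' * g₁) * (g * g' * g₁) * (star (g' * g₁) * (g' * g₁))
      = star (g * g' * g₁) * (g * g' * g₁) := by
    have ha : g * g' * g₁ = g * (g' * g₁) := mul_assoc g g' g₁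
    rw [ha, ISG.star_mul g (g' * g₁)]
    generalize g' * g₁ = a
    calc star a * star g * (g * a) * (star a * a)
        = star a * ((star g * g) * (a * star a)) * a := by simp [mul_assoc]
    _ = star a * ((a * star a) * (star g * g)) * a := by
          rw [ISG.idem_comm (ISG.idem_star_mul g) (ISG.idem_mul_star a)]
    _ = (star a * a * star a) * ((star g * g) * a) := by simp [mul_assoc]
    _ = star a * ((star g * g) * a) := by rw [InverseSemigroup.star_mul_self_mul_star]
    _ = star a * star g * (g * a) := by simp [mul_assoc]
  have hcond' : e₁ * ιG α (star (g' * g₁) * (g' * g₁)) = e₁ := by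
    calc e₁ * ιG α (star (g' * g₁) * (g' * g₁))
        = e₁ * ιG α (star (g * g' * g₁) * (g * g' * g₁))
            * ιG α (star (g' * g₁) * (g' * g₁)) := by rw [key]
    _ = e₁ * ιG α (star (g * g' * g₁) * (g * g' * g₁) * (star (g' * g₁) * (g' * g₁))) := by
          simp [ιG_mul, mul_assoc]
    _ = e₁ * ιG α (star (g * g' * g₁) * (g * g' * g₁)) := by rw [hGidem]
    _ = e₁ := key
  exact ⟨hne, g' * g₁, e₁, he₁, by rw [hrep, ιG_mul, mul_assoc], hcond'⟩

lemma central_fix {h : F α} (hh : h ∈ GH α S) (g : G)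
    (hx : ιG α (g * star g) * h ∈ GH α S) : ιG α (g * star g) * h = h := by
  obtain ⟨g₁, e₁, he₁, hrep, hcond⟩ := hh.2
  have hxrep : ιG α (g * star g) * h = ιG α (g * star g * g₁) * e₁ := by
    rw [hrep]; simp [ιG_mul, mul_assoc]
  have key := (GH_key α S hx he₁ hxrep).2
  have hGeq : g₁ * (star (g * star g * g₁) * (g * star g * g₁)) = g * star g * g₁ := by
    have h1 : star (g * star g * g₁) = star g₁ * (g * star g) := by
      rw [ISG.star_mul, ISG.star_idem (ISG.idem_mul_star g)]
    rw [h1]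
    calc g₁ * (star g₁ * (g * star g) * (g * star g * g₁))
        = (g₁ * star g₁) * ((g * star g) * (g * star g)) * g₁ := by simp [mul_assoc]
    _ = (g₁ * star g₁) * (g * star g) * g₁ := by rw [ISG.idem_mul_star g]
    _ = (g * star g) * (g₁ * star g₁) * g₁ := by
          rw [ISG.idem_comm (ISG.idem_mul_star g₁) (ISG.idem_mul_star g)]
    _ = (g * star g) * (g₁ * star g₁ * g₁) := by simp [mul_assoc]
    _ = g * star g * g₁ := by rw [InverseSemigroup.mul_star_mul_self]
  calc ιG α (g * star g) * h = ιG α (g * star g * g₁) * e₁ := hxrep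
  _ = ιG α (g₁ * (star (g * star g * g₁) * (g * star g * g₁))) * e₁ := by rw [hGeq]
  _ = ιG α g₁ * (ιG α (star (g * star g * g₁) * (g * star g * g₁)) * e₁) := by
        simp [ιG_mul, mul_assoc]
  _ = ιG α g₁ * (e₁ * ιG α (star (g * star g * g₁) * (g * star g * g₁))) := by
        rw [EH_commute_idem α S he₁.1 (ISG.idem_star_mul (g * star g * g₁))]
  _ = ιG α g₁ * e₁ := by rw [key]
  _ = h := hrep.symm

end Aux


section BetaSec

open scoped ZeroAtInfty Classical

variable {G : Type*} [InverseSemigroup G]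
variable {A : Type*} [NonUnitalNormedRing A] [StarRing A] [CStarRing A] [NormedSpace ℂ A]
  [IsScalarTower ℂ A A] [SMulCommClass ℂ A A] [StarModule ℂ A] [CompleteSpace A]
variable (α : G → A →⋆ₙₐ[ℂ] A) (S : Set G)

set_option linter.unusedSectionVars false

lemma rT_equivalence (hS : IsSubInvSemigroup S) :
    Equivalence (fun x y : {z : F α // z ∈ GH α S} => equivH α S x.1 y.1) :=
  ⟨fun x => equivH_refl α S x.2, fun {x y} h => equivH_symm α S hS x.2 y.2 h,
   fun {x y z} h1 h2 => equivH_trans α S hS z.2 h1 h2⟩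

lemma QGH_exact (hS : IsSubInvSemigroup S) {x y : {z : F α // z ∈ GH α S}}
    (h : QGHmk α S x = QGHmk α S y) : equivH α S x.1 y.1 := by
  have h2 := Quot.eqvGen_exact h
  rwa [(rT_equivalence α S hS).eqvGen_eq] at h2

lemma good_congr (hS : IsSubInvSemigroup S) {h h' : {z : F α // z ∈ GH α S}}
    (hr : equivH α S h.1 h'.1) (g : G) (hg : ιG α g * h.1 ∈ GH α S) :
    ιG α g * h'.1 ∈ GH α S := by
  obtain ⟨t, ht, hmul⟩ := hr
  exact (equivH_fwd α S hS h.2 h'.2 ht hmul g hg).1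

lemma mk_eq_of (hS : IsSubInvSemigroup S) {h h' : {z : F α // z ∈ GH α S}}
    (hr : equivH α S h.1 h'.1) (g : G) (hg : ιG α g * h.1 ∈ GH α S)
    (hg' : ιG α g * h'.1 ∈ GH α S) :
    QGHmk α S ⟨ιG α g * h.1, hg⟩ = QGHmk α S ⟨ιG α g * h'.1, hg'⟩ := by
  obtain ⟨t, ht, hmul⟩ := hr
  have h2 := equivH_fwd α S hS h.2 h'.2 ht hmul g hg
  exact Quot.sound ⟨t, ht, h2.2⟩

lemma mk_inj (hS : IsSubInvSemigroup S) {h h' : {z : F α // z ∈ GH α S}} (g : G)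
    (hg : ιG α g * h.1 ∈ GH α S) (hg' : ιG α g * h'.1 ∈ GH α S)
    (he : QGHmk α S ⟨ιG α g * h.1, hg⟩ = QGHmk α S ⟨ιG α g * h'.1, hg'⟩) :
    QGHmk α S h = QGHmk α S h' := by
  obtain ⟨t, ht, hmul⟩ := QGH_exact α S hS he
  exact Quot.sound ⟨t, ht, equivH_inj α S h.2 h'.2 g hg hg' hmul⟩

/-- The domain of the partial inverse of translation by `g` on the quotient. -/
def preP (g : G) (q : QGH α S) : Prop :=
  ∃ h : {z : F α // z ∈ GH α S}, ∃ hg : ιG α g * h.1 ∈ GH α S,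
    QGHmk α S ⟨ιG α g * h.1, hg⟩ = q

/-- The underlying function of `β_g`. -/
noncomputable def bmap (g : G) (x : C₀(QGH α S, ℂ)) (q : QGH α S) : ℂ :=
  if hq : preP α S g q then x (QGHmk α S hq.choose) else 0

lemma deltaFn_apply {W : Type*} [NormedAddCommGroup W] (q p : QGH α S) (w : W) :
    deltaFn α S q w p = if p = q then w else 0 := by
  rw [deltaFn]
  simp only [ZeroAtInftyContinuousMap.coe_mk, ContinuousMap.coe_mk]

lemma bmap_zero_at_infty (hS : IsSubInvSemigroup S) (g : G) (x : C₀(QGH α S, ℂ)) :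
    Filter.Tendsto (bmap α S g x) (Filter.cocompact (QGH α S)) (nhds 0) := by
  refine Metric.tendsto_nhds.mpr fun ε hε => ?_
  have hx := Metric.tendsto_nhds.mp x.zero_at_infty' ε hε
  obtain ⟨K₀, hK₀c, hK₀⟩ := Filter.mem_cocompact.mp hx
  have hK₀fin : K₀.Finite := isCompact_iff_finite.mp hK₀c
  have hKfin : {q : QGH α S | ∃ hq : preP α S g q, QGHmk α S hq.choose ∈ K₀}.Finite := by
    apply Set.Finite.of_finite_image (f := fun q : QGH α S =>
      if hq : preP α S g q then QGHmk α S hq.choose else q)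
    · refine hK₀fin.subset ?_
      rintro p ⟨q, ⟨hq, hmem⟩, rfl⟩
      simpa only [dif_pos hq] using hmem
    · rintro q₁ ⟨hp₁, _⟩ q₂ ⟨hp₂, _⟩ he
      simp only [dif_pos hp₁, dif_pos hp₂] at he
      obtain ⟨hg₁, hmk₁⟩ := hp₁.choose_spec
      obtain ⟨hg₂, hmk₂⟩ := hp₂.choose_spec
      calc q₁ = QGHmk α S ⟨_, hg₁⟩ := hmk₁.symm
      _ = QGHmk α S ⟨_, hg₂⟩ := mk_eq_of α S hS (QGH_exact α S hS he) g hg₁ hg₂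
      _ = q₂ := hmk₂
  refine Filter.mem_cocompact.mpr ⟨_, hKfin.isCompact, fun q hqK => ?_⟩
  simp only [Set.mem_compl_iff, Set.mem_setOf_eq, not_exists] at hqK
  by_cases hq : preP α S g q
  · have hnot : QGHmk α S hq.choose ∉ K₀ := hqK hq
    have hb : bmap α S g x q = x (QGHmk α S hq.choose) := dif_pos hq
    show dist (bmap α S g x q) 0 < ε
    rw [hb]
    exact hK₀ hnot
  · have hb : bmap α S g x q = 0 := dif_neg hq
    show dist (bmap α S g x q) 0 < ε
    rw [hb]
    simpa using hε

/-- `β_g x` as an element of `C₀`. -/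
noncomputable def bfun (hS : IsSubInvSemigroup S) (g : G) (x : C₀(QGH α S, ℂ)) :
    C₀(QGH α S, ℂ) where
  toFun := bmap α S g x
  continuous_toFun := continuous_of_discreteTopology
  zero_at_infty' := bmap_zero_at_infty α S hS g x

lemma bfun_apply (hS : IsSubInvSemigroup S) (g : G) (x : C₀(QGH α S, ℂ)) (q : QGH α S) :
    bfun α S hS g x q = bmap α S g x q := rfl

/-- The endomorphism `β_g` of `c₀(G_H/H)`. -/
noncomputable def beta (hS : IsSubInvSemigroup S) (g : G) :
    C₀(QGH α S, ℂ) →⋆ₙₐ[ℂ] C₀(QGH α S, ℂ) where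
  toFun x := bfun α S hS g x
  map_smul' c x := by
    ext q
    show bmap α S g (c • x) q = (c • bfun α S hS g x) q
    by_cases hq : preP α S g q <;>
      simp [bmap, bfun_apply, hq, ZeroAtInftyContinuousMap.coe_smul]
  map_zero' := by
    ext q
    show bmap α S g 0 q = (0 : C₀(QGH α S, ℂ)) q
    by_cases hq : preP α S g q <;> simp [bmap, hq]
  map_add' x y := by
    ext q
    show bmap α S g (x + y) q = (bfun α S hS g x + bfun α S hS g y) q
    by_cases hq : preP α S g q <;>
      simp [bmap, bfun_apply, hq, ZeroAtInftyContinuousMap.coe_add]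
  map_mul' x y := by
    ext q
    show bmap α S g (x * y) q = (bfun α S hS g x * bfun α S hS g y) q
    by_cases hq : preP α S g q <;>
      simp [bmap, bfun_apply, hq, ZeroAtInftyContinuousMap.coe_mul]
  map_star' x := by
    ext q
    show bmap α S g (star x) q = (star (bfun α S hS g x)) q
    by_cases hq : preP α S g q <;>
      simp [bmap, bfun_apply, hq, ZeroAtInftyContinuousMap.coe_star]

lemma beta_apply (hS : IsSubInvSemigroup S) (g : G) (x : C₀(QGH α S, ℂ)) (q : QGH α S) :
    beta α S hS g x q = bmap α S g x q := rfl

lemma beta_cont (hS : IsSubInvSemigroup S) (g : G) : Continuous (beta α S hS g) := by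
  have hlip : ∀ x y : C₀(QGH α S, ℂ),
      dist (beta α S hS g x) (beta α S hS g y) ≤ dist x y := by
    intro x y
    rw [← ZeroAtInftyContinuousMap.dist_toBCF_eq_dist]
    refine (BoundedContinuousFunction.dist_le dist_nonneg).mpr fun q => ?_
    show dist (bmap α S g x q) (bmap α S g y q) ≤ dist x y
    by_cases hq : preP α S g q
    · rw [bmap, bmap, dif_pos hq, dif_pos hq]
      calc dist (x (QGHmk α S hq.choose)) (y (QGHmk α S hq.choose))
          = dist (x.toBCF (QGHmk α S hq.choose)) (y.toBCF (QGHmk α S hq.choose)) := rfl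
      _ ≤ dist x.toBCF y.toBCF := BoundedContinuousFunction.dist_coe_le_dist _
      _ = dist x y := ZeroAtInftyContinuousMap.dist_toBCF_eq_dist
    · rw [bmap, bmap, dif_neg hq, dif_neg hq]
      simpa using dist_nonneg
  exact (LipschitzWith.of_dist_le_mul (K := 1)
    (fun x y => by simpa using hlip x y)).continuous

lemma beta_delta (hS : IsSubInvSemigroup S) (g : G) (h : {z : F α // z ∈ GH α S}) :
    beta α S hS g (deltaFn α S (QGHmk α S h) (1 : ℂ)) =
      if hgh : ιG α g * h.1 ∈ GH α S then
        deltaFn α S (QGHmk α S ⟨ιG α g * h.1, hgh⟩) (1 : ℂ)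
      else 0 := by
  by_cases hgh : ιG α g * h.1 ∈ GH α S
  · rw [dif_pos hgh]
    ext q
    rw [beta_apply, deltaFn_apply]
    by_cases hq : preP α S g q
    · rw [bmap, dif_pos hq, deltaFn_apply]
      obtain ⟨hg₁, hmk₁⟩ := hq.choose_spec
      by_cases hqe : q = QGHmk α S ⟨ιG α g * h.1, hgh⟩
      · have hch : QGHmk α S hq.choose = QGHmk α S h :=
          mk_inj α S hS g hg₁ hgh (hmk₁.trans hqe)
        rw [if_pos hch, if_pos hqe]
      · have hch : QGHmk α S hq.choose ≠ QGHmk α S h := by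
          intro he
          apply hqe
          rw [← hmk₁, mk_eq_of α S hS (QGH_exact α S hS he) g hg₁ hgh]
        rw [if_neg hch, if_neg hqe]
    · rw [bmap, dif_neg hq]
      have hne : q ≠ QGHmk α S ⟨ιG α g * h.1, hgh⟩ := by
        rintro rfl
        exact hq ⟨h, hgh, rfl⟩
      rw [if_neg hne]
  · rw [dif_neg hgh]
    ext q
    rw [beta_apply]
    show bmap α S g (deltaFn α S (QGHmk α S h) (1 : ℂ)) q = 0
    by_cases hq : preP α S g q
    · rw [bmap, dif_pos hq, deltaFn_apply]
      obtain ⟨hg₁, hmk₁⟩ := hq.choose_spec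
      have hch : QGHmk α S hq.choose ≠ QGHmk α S h := by
        intro he
        exact hgh (good_congr α S hS (QGH_exact α S hS he) g hg₁)
      rw [if_neg hch]
    · exact dif_neg hq

/-- Evaluation at a point, as an additive monoid homomorphism. -/
def evp (p : QGH α S) : C₀(QGH α S, ℂ) →+ ℂ where
  toFun f := f p
  map_zero' := rfl
  map_add' f g := by
    show (f + g) p = f p + g p
    rw [ZeroAtInftyContinuousMap.coe_add]; rfl

lemma dense_span :
    Dense (↑(Submodule.span ℂ (Set.range fun q : QGH α S => deltaFn α S q (1 : ℂ))) :
      Set C₀(QGH α S, ℂ)) := by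
  refine Metric.dense_iff.mpr fun x r hr => ?_
  have hr2 : 0 < r / 2 := half_pos hr
  have hx := Metric.tendsto_nhds.mp x.zero_at_infty' (r / 2) hr2
  obtain ⟨K₀, hK₀c, hK₀⟩ := Filter.mem_cocompact.mp hx
  have hfin : K₀.Finite := isCompact_iff_finite.mp hK₀c
  set y := ∑ q ∈ hfin.toFinset, x q • deltaFn α S q (1 : ℂ) with hy
  have hyspan : y ∈ Submodule.span ℂ (Set.range fun q : QGH α S => deltaFn α S q (1 : ℂ)) :=
    Submodule.sum_mem _ fun q _ => Submodule.smul_mem _ _ (Submodule.subset_span ⟨q, rfl⟩)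
  have hyval : ∀ p, y p = if p ∈ hfin.toFinset then x p else 0 := by
    intro p
    have h1 : y p = ∑ q ∈ hfin.toFinset, (x q • deltaFn α S q (1 : ℂ)) p :=
      map_sum (evp α S p) _ _
    rw [h1]
    calc ∑ q ∈ hfin.toFinset, (x q • deltaFn α S q (1 : ℂ)) p
        = ∑ q ∈ hfin.toFinset, if p = q then x q else 0 := by
          refine Finset.sum_congr rfl fun q _ => ?_
          rw [ZeroAtInftyContinuousMap.coe_smul, Pi.smul_apply, deltaFn_apply]
          simp [mul_ite]
    _ = if p ∈ hfin.toFinset then x p else 0 := Finset.sum_ite_eq hfin.toFinset p x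
  have hdist : dist x y ≤ r / 2 := by
    rw [← ZeroAtInftyContinuousMap.dist_toBCF_eq_dist]
    refine (BoundedContinuousFunction.dist_le hr2.le).mpr fun p => ?_
    show dist (x p) (y p) ≤ r / 2
    by_cases hp : p ∈ hfin.toFinset
    · rw [hyval p, if_pos hp]
      simpa using hr2.le
    · rw [hyval p, if_neg hp]
      have hpK : p ∈ K₀ᶜ := by
        intro hmem
        exact hp (hfin.mem_toFinset.mpr hmem)
      exact (hK₀ hpK).le
  refine ⟨y, Metric.mem_ball.mpr ?_, hyspan⟩
  rw [dist_comm]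
  exact lt_of_le_of_lt hdist (by linarith)

set_option synthInstance.maxHeartbeats 1000000 in
lemma beta_unique (hS : IsSubInvSemigroup S) (g : G)
    (γ : C₀(QGH α S, ℂ) →⋆ₙₐ[ℂ] C₀(QGH α S, ℂ)) (hγc : Continuous γ)
    (hγ : ∀ h : {z : F α // z ∈ GH α S},
      γ (deltaFn α S (QGHmk α S h) (1 : ℂ)) =
        if hgh : ιG α g * h.1 ∈ GH α S then
          deltaFn α S (QGHmk α S ⟨ιG α g * h.1, hgh⟩) (1 : ℂ)
        else 0) :
    γ = beta α S hS g := by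
  have heq : Set.EqOn ⇑γ ⇑(beta α S hS g)
      ↑(Submodule.span ℂ (Set.range fun q : QGH α S => deltaFn α S q (1 : ℂ))) := by
    intro y hy
    induction hy using Submodule.span_induction with
    | mem z hz =>
      obtain ⟨q, rfl⟩ := hz
      obtain ⟨a, ha⟩ := Quot.exists_rep q
      have ha' : QGHmk α S a = q := ha
      show γ _ = beta α S hS g _
      rw [← ha', hγ a, beta_delta α S hS g a]
    | zero => show γ 0 = beta α S hS g 0; rw [map_zero, map_zero]
    | add u v hu hv ihu ihv =>
      show γ (u + v) = beta α S hS g (u + v)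
      rw [map_add, map_add, ihu, ihv]
    | smul c u hu ihu =>
      show γ (c • u) = beta α S hS g (c • u)
      rw [map_smul, map_smul, ihu]
  have hT2 : T2Space (C₀(QGH α S, ℂ)) := TopologicalSpace.t2Space_of_metrizableSpace
  have hfun : ⇑γ = ⇑(beta α S hS g) :=
    Continuous.ext_on (dense_span α S) hγc (beta_cont α S hS g) heq
  exact DFunLike.ext _ _ fun x => congrFun hfun x

lemma beta_mul (hS : IsSubInvSemigroup S) (g g' : G) :
    beta α S hS (g * g') = (beta α S hS g).comp (beta α S hS g') := by
  refine (beta_unique α S hS (g * g') ((beta α S hS g).comp (beta α S hS g')) ?_ ?_).symm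
  · have hcoe : ⇑((beta α S hS g).comp (beta α S hS g'))
        = ⇑(beta α S hS g) ∘ ⇑(beta α S hS g') := rfl
    rw [hcoe]
    exact (beta_cont α S hS g).comp (beta_cont α S hS g')
  · intro h
    have hcomp : ((beta α S hS g).comp (beta α S hS g')) (deltaFn α S (QGHmk α S h) (1 : ℂ))
        = beta α S hS g (beta α S hS g' (deltaFn α S (QGHmk α S h) (1 : ℂ))) := rfl
    rw [hcomp, beta_delta α S hS g' h]
    have hel : ιG α (g * g') * h.1 = ιG α g * (ιG α g' * h.1) := by rw [ιG_mul, mul_assoc]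
    by_cases h1 : ιG α g' * h.1 ∈ GH α S
    · rw [dif_pos h1, beta_delta α S hS g ⟨ιG α g' * h.1, h1⟩]
      by_cases h2 : ιG α g * (ιG α g' * h.1) ∈ GH α S
      · have hC : ιG α (g * g') * h.1 ∈ GH α S := by rw [hel]; exact h2
        rw [dif_pos h2, dif_pos hC]
        exact congrArg (fun p => deltaFn α S (QGHmk α S p) (1 : ℂ)) (Subtype.ext hel.symm)
      · have hC : ¬ (ιG α (g * g') * h.1 ∈ GH α S) := by rw [hel]; exact h2
        rw [dif_neg h2, dif_neg hC]
    · rw [dif_neg h1, map_zero]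
      have hC : ¬ (ιG α (g * g') * h.1 ∈ GH α S) := fun hc => h1 (GH_decomp α S h.2 g g' hc)
      rw [dif_neg hC]

lemma beta_central (hS : IsSubInvSemigroup S) (g : G) (x y : C₀(QGH α S, ℂ)) :
    beta α S hS (g * star g) x * y = x * beta α S hS (g * star g) y := by
  ext q
  rw [ZeroAtInftyContinuousMap.coe_mul, Pi.mul_apply, ZeroAtInftyContinuousMap.coe_mul,
    Pi.mul_apply, beta_apply, beta_apply]
  by_cases hq : preP α S (g * star g) q
  · have hfix : QGHmk α S hq.choose = q := by
      obtain ⟨hg₁, hmk₁⟩ := hq.choose_spec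
      have h2 : QGHmk α S ⟨ιG α (g * star g) * hq.choose.1, hg₁⟩ = QGHmk α S hq.choose :=
        congrArg (QGHmk α S) (Subtype.ext (central_fix α S hq.choose.2 g hg₁))
      exact h2.symm.trans hmk₁
    rw [bmap, bmap, dif_pos hq, dif_pos hq, hfix]
  · rw [bmap, bmap, dif_neg hq, dif_neg hq, zero_mul, mul_zero]

end BetaSec

end Green
namespace Green

open scoped ZeroAtInfty

open scoped Classical in
/-- Let `G` be an inverse semigroup, `H' = S ⊆ G` a finite
sub-inverse semigroup and `A` a `G`-algebra; let `c₀(G_H/H)` be the C*-algebra of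
complex-valued functions on the discrete set `G_H/H` vanishing at infinity and `δ_[h]`
the characteristic function of the class of `h ∈ G_H`.  Then:
(1) if `h ≡ h'` in `G_H` and `g ∈ G`, then `g·h ∈ G_H ↔ g·h' ∈ G_H`, and in that case
    `g·h ≡ g·h'`;
(2) for each `g ∈ G` there is a unique bounded *-endomorphism `β_g` of `c₀(G_H/H)` with
    `β_g(δ_[h]) = [g·h ∈ G_H]·δ_[g·h]` for all `h ∈ G_H`;
(3) `g ↦ β_g` is a semigroup homomorphism and `β_{g g*}(x)·y = x·β_{g g*}(y)` for all
    `x, y ∈ c₀(G_H/H)`, i.e. it makes `c₀(G_H/H)` a `G`-algebra. -/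
theorem c0_quotient_is_G_algebra
    {G : Type*} [InverseSemigroup G]
    {A : Type*} [NonUnitalNormedRing A] [StarRing A] [CStarRing A] [NormedSpace ℂ A]
    [IsScalarTower ℂ A A] [SMulCommClass ℂ A A] [StarModule ℂ A] [CompleteSpace A]
    (α : G → A →⋆ₙₐ[ℂ] A) (hα : IsGAlgebra α)
    (S : Set G) (hS : IsSubInvSemigroup S) (hSfin : S.Finite) :
    (∀ (h h' : F α), h ∈ GH α S → h' ∈ GH α S → equivH α S h h' → ∀ g : G,
      ((ιG α g * h ∈ GH α S) ↔ (ιG α g * h' ∈ GH α S)) ∧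
      (ιG α g * h ∈ GH α S → equivH α S (ιG α g * h) (ιG α g * h'))) ∧
    ∃ β : G → (C₀(QGH α S, ℂ) →⋆ₙₐ[ℂ] C₀(QGH α S, ℂ)),
      (∀ g : G, Continuous (β g)) ∧
      (∀ (g : G) (h : {z : F α // z ∈ GH α S}),
        β g (deltaFn α S (QGHmk α S h) (1 : ℂ)) =
          if hgh : ιG α g * h.1 ∈ GH α S then
            deltaFn α S (QGHmk α S ⟨ιG α g * h.1, hgh⟩) (1 : ℂ)
          else 0) ∧
      (∀ (g : G) (γ : C₀(QGH α S, ℂ) →⋆ₙₐ[ℂ] C₀(QGH α S, ℂ)), Continuous γ →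
        (∀ h : {z : F α // z ∈ GH α S},
          γ (deltaFn α S (QGHmk α S h) (1 : ℂ)) =
            if hgh : ιG α g * h.1 ∈ GH α S then
              deltaFn α S (QGHmk α S ⟨ιG α g * h.1, hgh⟩) (1 : ℂ)
            else 0) →
        γ = β g) ∧
      (∀ g g' : G, β (g * g') = (β g).comp (β g')) ∧
      (∀ (g : G) (x y : C₀(QGH α S, ℂ)),
        β (g * star g) x * y = x * β (g * star g) y) := by
  constructor
  · intro h h' hh hh' he g
    refine ⟨⟨?_, ?_⟩, ?_⟩
    · intro hgh
      obtain ⟨t, ht, hmul⟩ := he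
      exact (equivH_fwd α S hS hh hh' ht hmul g hgh).1
    · intro hgh'
      obtain ⟨t, ht, hmul⟩ := equivH_symm α S hS hh hh' he
      exact (equivH_fwd α S hS hh' hh ht hmul g hgh').1
    · intro hgh
      obtain ⟨t, ht, hmul⟩ := he
      exact ⟨t, ht, (equivH_fwd α S hS hh hh' ht hmul g hgh).2⟩
  · exact ⟨beta α S hS, fun g => beta_cont α S hS g, fun g h => beta_delta α S hS g h,
      fun g γ hγc hγ => beta_unique α S hS g γ hγc hγ, fun g g' => beta_mul α S hS g g',
      fun g x y => beta_central α S hS g x y⟩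

end Green
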